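/- Let A ∈ ℂ^{N×N} be tridiagonal with all superdiagonal and subdiagonal entries nonzero, and suppose that for every k ∈ {1,…,N} the principal submatrices A_{k−1} = [A_{ij}]_{1≤i,j≤k−1} and Ã_{k+1} = [A_{ij}]_{k+1≤i,j≤N} have disjoint spectra. Then every eigenvector of A has all entries nonzero. -/
import Mathlib


open Matrix

/-- If `A` is tridiagonal with nonzero super- and subdiagonal entries, and for every `k`
the leading principal submatrix `A_{k-1}` (indices `< k`) and the trailing principal
submatrix `Ã_{k+1}` (indices `> k`) have disjoint spectra, then every eigenvector of `A`
has all entries nonzero. -/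
theorem stmt_3 (N : ℕ) (A : Matrix (Fin N) (Fin N) ℂ)
    (htri : ∀ i j : Fin N, ((i : ℕ) + 1 < (j : ℕ) ∨ (j : ℕ) + 1 < (i : ℕ)) → A i j = 0)
    (hoff : ∀ i j : Fin N, (j : ℕ) = (i : ℕ) + 1 → A i j ≠ 0 ∧ A j i ≠ 0)
    (hspec : ∀ k : Fin N, ∀ lam : ℂ,
      ¬ ((∃ v : Fin (k : ℕ) → ℂ, v ≠ 0 ∧
            (Matrix.of fun i j : Fin (k : ℕ) =>
              A (Fin.castLE k.isLt.le i) (Fin.castLE k.isLt.le j)).mulVec v = lam • v) ∧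
         (∃ w : Fin (N - (k : ℕ) - 1) → ℂ, w ≠ 0 ∧
            (Matrix.of fun i j : Fin (N - (k : ℕ) - 1) =>
              A ⟨(k : ℕ) + 1 + (i : ℕ), by have := i.isLt; omega⟩
                ⟨(k : ℕ) + 1 + (j : ℕ), by have := j.isLt; omega⟩).mulVec w = lam • w)))
    (Ξ : Fin N → ℂ) (lam : ℂ) (heig : A.mulVec Ξ = lam • Ξ) (hne : Ξ ≠ 0) :
    ∀ i, Ξ i ≠ 0 := by
  classical
  have hrow : ∀ i : Fin N, (∑ j : Fin N, A i j * Ξ j) = lam * Ξ i := by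
    intro i
    have := congrFun heig i
    simpa [Matrix.mulVec, dotProduct] using this
  intro i0 hz
  -- propagation to the right
  have hright : (∀ j : Fin N, (j : ℕ) ≤ (i0 : ℕ) → Ξ j = 0) → ∀ j : Fin N, Ξ j = 0 := by
    intro h0
    have key : ∀ n : ℕ, ∀ j : Fin N, (j : ℕ) ≤ (i0 : ℕ) + n → Ξ j = 0 := by
      intro n
      induction n with
      | zero => intro j hj; exact h0 j (by omega)
      | succ n ih =>
        intro j hj
        by_cases hle : (j : ℕ) ≤ (i0 : ℕ) + n
        · exact ih j hle
        · have hjv : (j : ℕ) = (i0 : ℕ) + n + 1 := by omega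
          have hiN : (i0 : ℕ) + n < N := by have := j.isLt; omega
          set i : Fin N := ⟨(i0 : ℕ) + n, hiN⟩ with hidef
          have hsum : (∑ j' : Fin N, A i j' * Ξ j') = A i j * Ξ j := by
            apply Fintype.sum_eq_single
            intro j' hj'
            by_cases h1 : (j' : ℕ) ≤ (i0 : ℕ) + n
            · rw [ih j' h1]; ring
            · have hne' : (j' : ℕ) ≠ (j : ℕ) := fun h => hj' (Fin.ext h)
              have hA : A i j' = 0 := htri i j' (Or.inl (by simp [hidef]; omega))
              rw [hA]; ring
          have hXi : Ξ i = 0 := ih i (by simp [hidef])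
          have := hrow i
          rw [hsum, hXi, mul_zero] at this
          have hAne : A i j ≠ 0 := (hoff i j (by simp [hidef]; omega)).1
          exact (mul_eq_zero.mp this).resolve_left hAne
    intro j
    exact key (j : ℕ) j (by omega)
  -- propagation to the left
  have hleft : (∀ j : Fin N, (i0 : ℕ) ≤ (j : ℕ) → Ξ j = 0) → ∀ j : Fin N, Ξ j = 0 := by
    intro h0
    have key : ∀ n : ℕ, ∀ j : Fin N, (i0 : ℕ) ≤ (j : ℕ) + n → Ξ j = 0 := by
      intro n
      induction n with
      | zero => intro j hj; exact h0 j (by omega)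
      | succ n ih =>
        intro j hj
        by_cases hle : (i0 : ℕ) ≤ (j : ℕ) + n
        · exact ih j hle
        · have hjv : (j : ℕ) + n + 1 = (i0 : ℕ) := by omega
          have hiN : (j : ℕ) + 1 < N := by have := i0.isLt; omega
          set i : Fin N := ⟨(j : ℕ) + 1, hiN⟩ with hidef
          have hsum : (∑ j' : Fin N, A i j' * Ξ j') = A i j * Ξ j := by
            apply Fintype.sum_eq_single
            intro j' hj'
            by_cases h1 : (i0 : ℕ) ≤ (j' : ℕ) + n
            · rw [ih j' h1]; ring
            · have hne' : (j' : ℕ) ≠ (j : ℕ) := fun h => hj' (Fin.ext h)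
              have hA : A i j' = 0 := htri i j' (Or.inr (by simp [hidef]; omega))
              rw [hA]; ring
          have hXi : Ξ i = 0 := ih i (by simp [hidef]; omega)
          have := hrow i
          rw [hsum, hXi, mul_zero] at this
          have hAne : A i j ≠ 0 := (hoff j i (by simp [hidef])).2
          exact (mul_eq_zero.mp this).resolve_left hAne
    intro j
    exact key (i0 : ℕ) j (by omega)
  by_cases hv : ∀ j : Fin N, (j : ℕ) < (i0 : ℕ) → Ξ j = 0
  · apply hne
    funext j
    refine hright (fun j' hj' => ?_) j
    rcases lt_or_eq_of_le hj' with h | h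
    · exact hv j' h
    · have : j' = i0 := Fin.ext h
      rw [this]; exact hz
  by_cases hw : ∀ j : Fin N, (i0 : ℕ) < (j : ℕ) → Ξ j = 0
  · apply hne
    funext j
    refine hleft (fun j' hj' => ?_) j
    rcases lt_or_eq_of_le hj' with h | h
    · exact hw j' h
    · have : j' = i0 := Fin.ext h.symm
      rw [this]; exact hz
  push_neg at hv hw
  obtain ⟨a, ha1, ha2⟩ := hv
  obtain ⟨b, hb1, hb2⟩ := hw
  refine hspec i0 lam ⟨⟨fun i => Ξ (Fin.castLE i0.isLt.le i), ?_, ?_⟩,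
    ⟨fun i => Ξ ⟨(i0 : ℕ) + 1 + (i : ℕ), by have := i.isLt; omega⟩, ?_, ?_⟩⟩
  · intro h
    apply ha2
    have := congrFun h ⟨(a : ℕ), ha1⟩
    simpa using this
  · funext i
    set i' : Fin N := Fin.castLE i0.isLt.le i with hi'
    set F : ℕ → ℂ := fun j => if h : j < N then A i' ⟨j, h⟩ * Ξ ⟨j, h⟩ else 0 with hFdef
    have hF : ∀ (j : ℕ) (h : j < N), F j = A i' ⟨j, h⟩ * Ξ ⟨j, h⟩ := fun j h => dif_pos h
    have h1 : (∑ j : Fin (i0 : ℕ), A i' (Fin.castLE i0.isLt.le j) * Ξ (Fin.castLE i0.isLt.le j))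
        = ∑ j ∈ Finset.range (i0 : ℕ), F j := by
      rw [← Fin.sum_univ_eq_sum_range F (i0 : ℕ)]
      refine Finset.sum_congr rfl fun j _ => ?_
      have hjN : (j : ℕ) < N := j.isLt.trans i0.isLt
      rw [hF (j : ℕ) hjN]
      rfl
    have h2 : (∑ j : Fin N, A i' j * Ξ j) = ∑ j ∈ Finset.range N, F j := by
      rw [← Fin.sum_univ_eq_sum_range F N]
      refine Finset.sum_congr rfl fun j _ => ?_
      rw [hF (j : ℕ) j.isLt]
    have h3 : (∑ j ∈ Finset.range (i0 : ℕ), F j) = ∑ j ∈ Finset.range N, F j := by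
      apply Finset.sum_subset (Finset.range_subset_range.mpr i0.isLt.le)
      intro j hjN hjk
      rw [Finset.mem_range] at hjN hjk
      push_neg at hjk
      rw [hF j hjN]
      rcases eq_or_lt_of_le hjk with h | h
      · have : (⟨j, hjN⟩ : Fin N) = i0 := Fin.ext h.symm
        rw [this, hz, mul_zero]
      · have hA : A i' ⟨j, hjN⟩ = 0 := by
          apply htri
          left
          have : (i' : ℕ) = (i : ℕ) := rfl
          simp only [this]
          have := i.isLt
          omega
        rw [hA, zero_mul]
    show (∑ j : Fin (i0 : ℕ), A (Fin.castLE i0.isLt.le i) (Fin.castLE i0.isLt.le j)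
        * Ξ (Fin.castLE i0.isLt.le j)) = lam * Ξ (Fin.castLE i0.isLt.le i)
    rw [← hi', h1, h3, ← h2, hrow i']
  · intro h
    apply hb2
    have hb' : (b : ℕ) - (i0 : ℕ) - 1 < N - (i0 : ℕ) - 1 := by have := b.isLt; omega
    have := congrFun h ⟨(b : ℕ) - (i0 : ℕ) - 1, hb'⟩
    simp only [Pi.zero_apply] at this
    rw [← this]
    congr 1
    apply Fin.ext
    simp
    omega
  · funext i
    have hiN : (i0 : ℕ) + 1 + (i : ℕ) < N := by have := i.isLt; omega
    set i' : Fin N := ⟨(i0 : ℕ) + 1 + (i : ℕ), hiN⟩ with hi'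
    set F : ℕ → ℂ := fun j => if h : j < N then A i' ⟨j, h⟩ * Ξ ⟨j, h⟩ else 0 with hFdef
    have hF : ∀ (j : ℕ) (h : j < N), F j = A i' ⟨j, h⟩ * Ξ ⟨j, h⟩ := fun j h => dif_pos h
    have h1 : (∑ j : Fin (N - (i0 : ℕ) - 1),
          A i' ⟨(i0 : ℕ) + 1 + (j : ℕ), by have := j.isLt; omega⟩
            * Ξ ⟨(i0 : ℕ) + 1 + (j : ℕ), by have := j.isLt; omega⟩)
        = ∑ j ∈ Finset.range (N - (i0 : ℕ) - 1), F ((i0 : ℕ) + 1 + j) := by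
      rw [← Fin.sum_univ_eq_sum_range (fun j => F ((i0 : ℕ) + 1 + j)) (N - (i0 : ℕ) - 1)]
      refine Finset.sum_congr rfl fun j _ => ?_
      have hjN : (i0 : ℕ) + 1 + (j : ℕ) < N := by have := j.isLt; omega
      rw [hF ((i0 : ℕ) + 1 + (j : ℕ)) hjN]
    have h2 : (∑ j : Fin N, A i' j * Ξ j) = ∑ j ∈ Finset.range N, F j := by
      rw [← Fin.sum_univ_eq_sum_range F N]
      refine Finset.sum_congr rfl fun j _ => ?_
      rw [hF (j : ℕ) j.isLt]
    have h3 : (∑ j ∈ Finset.range (N - (i0 : ℕ) - 1), F ((i0 : ℕ) + 1 + j))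
        = ∑ j ∈ Finset.Ico ((i0 : ℕ) + 1) N, F j := by
      rw [Finset.sum_Ico_eq_sum_range, Nat.sub_sub]
    have h4 : (∑ j ∈ Finset.Ico 0 ((i0 : ℕ) + 1), F j) = 0 := by
      apply Finset.sum_eq_zero
      intro j hj
      rw [Finset.mem_Ico] at hj
      have hjN : j < N := by have := i0.isLt; omega
      rw [hF j hjN]
      rcases eq_or_lt_of_le (Nat.lt_succ_iff.mp hj.2) with h | h
      · have : (⟨j, hjN⟩ : Fin N) = i0 := Fin.ext h
        rw [this, hz, mul_zero]
      · have hA : A i' ⟨j, hjN⟩ = 0 := by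
          apply htri
          right
          show j + 1 < (i0 : ℕ) + 1 + (i : ℕ)
          omega
        rw [hA, zero_mul]
    have h5 : (∑ j ∈ Finset.range N, F j) = ∑ j ∈ Finset.Ico ((i0 : ℕ) + 1) N, F j := by
      rw [Finset.range_eq_Ico,
        ← Finset.sum_Ico_consecutive F (Nat.zero_le ((i0 : ℕ) + 1)) (by have := i0.isLt; omega),
        h4, zero_add]
    show (∑ j : Fin (N - (i0 : ℕ) - 1),
          A i' ⟨(i0 : ℕ) + 1 + (j : ℕ), by have := j.isLt; omega⟩
            * Ξ ⟨(i0 : ℕ) + 1 + (j : ℕ), by have := j.isLt; omega⟩) = lam * Ξ i'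
    rw [h1, h3, ← h5, ← h2, hrow i']
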